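/- If z, w are in the open unit disc of ℂ and ω is on the unit circle, then |2ωzw − (z+w)| < |2 − ω(z+w)|; equivalently, the function Φ_ω(s,p) = (2ωp − s)/(2 − ωs) maps the symmetrised bidisc G into the open unit disc. -/

import Mathlib

/-- The symmetrised bidisc. -/
def symBidisc : Set (ℂ × ℂ) :=
  {x | ∃ z w : ℂ, ‖z‖ < 1 ∧ ‖w‖ < 1 ∧ x = (z + w, z * w)}

lemma key_ineq (u v : ℂ) (hu : ‖u‖ < 1) (hv : ‖v‖ < 1) :
    ‖2 * u * v - (u + v)‖ < ‖2 - (u + v)‖ := by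
  have hu' : Complex.normSq u < 1 := by
    have := Complex.sq_norm u
    nlinarith [norm_nonneg u]
  have hv' : Complex.normSq v < 1 := by
    have := Complex.sq_norm v
    nlinarith [norm_nonneg v]
  have hident : Complex.normSq (2 - (u + v)) - Complex.normSq (2 * u * v - (u + v)) =
      2 * (1 - Complex.normSq v) * Complex.normSq (1 - u)
      + 2 * (1 - Complex.normSq u) * Complex.normSq (1 - v) := by
    simp only [Complex.normSq_apply, Complex.sub_re, Complex.sub_im, Complex.add_re,
      Complex.add_im, Complex.mul_re, Complex.mul_im, Complex.re_ofNat, Complex.im_ofNat,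
      Complex.one_re, Complex.one_im]
    ring
  have h2 : Complex.normSq (2 * u * v - (u + v)) < Complex.normSq (2 - (u + v)) := by
    have p1 : 0 < Complex.normSq (1 - u) := by
      rw [Complex.normSq_pos]
      intro h
      have : u = 1 := by linear_combination -h
      rw [this] at hu'; simp [Complex.normSq_one] at hu'
    have p2 : 0 ≤ Complex.normSq (1 - v) := Complex.normSq_nonneg _
    nlinarith [mul_pos (by linarith : (0:ℝ) < 1 - Complex.normSq v) p1,
      mul_nonneg (by linarith : (0:ℝ) ≤ 1 - Complex.normSq u) p2]
  calc ‖2 * u * v - (u + v)‖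
      = Real.sqrt (Complex.normSq (2 * u * v - (u + v))) := by rw [Complex.norm_def]
    _ < Real.sqrt (Complex.normSq (2 - (u + v))) :=
        Real.sqrt_lt_sqrt (Complex.normSq_nonneg _) h2
    _ = ‖2 - (u + v)‖ := by rw [Complex.norm_def]

lemma main_ineq (z w ω : ℂ) (hz : ‖z‖ < 1) (hw : ‖w‖ < 1) (hω : ‖ω‖ = 1) :
    ‖2 * ω * (z * w) - (z + w)‖ < ‖2 - ω * (z + w)‖ := by
  have h1 : ‖2 * ω * (z * w) - (z + w)‖ = ‖2 * (ω * z) * (ω * w) - (ω * z + ω * w)‖ := by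
    have : 2 * (ω * z) * (ω * w) - (ω * z + ω * w) = ω * (2 * ω * (z * w) - (z + w)) := by ring
    rw [this, norm_mul, hω, one_mul]
  have h2 : (2 : ℂ) - ω * (z + w) = 2 - (ω * z + ω * w) := by ring
  rw [h1, h2]
  exact key_ineq (ω * z) (ω * w)
    (by rw [norm_mul, hω, one_mul]; exact hz)
    (by rw [norm_mul, hω, one_mul]; exact hw)

/-- If `z, w` are in the open unit disc and `ω` on the unit circle then
`|2ωzw − (z+w)| < |2 − ω(z+w)|`; equivalently `Φ_ω` maps `G` into the open unit disc. -/
theorem stmt_0 (z w ω : ℂ) (hz : ‖z‖ < 1) (hw : ‖w‖ < 1) (hω : ‖ω‖ = 1) :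
    ‖2 * ω * (z * w) - (z + w)‖ < ‖2 - ω * (z + w)‖ ∧
    ∀ x ∈ symBidisc, ‖(2 * ω * x.2 - x.1) / (2 - ω * x.1)‖ < 1 := by
  refine ⟨main_ineq z w ω hz hw hω, ?_⟩
  rintro x ⟨a, b, ha, hb, rfl⟩
  have h := main_ineq a b ω ha hb hω
  have hden : 0 < ‖(2 : ℂ) - ω * (a + b)‖ := lt_of_le_of_lt (norm_nonneg _) h
  simp only [norm_div]
  rw [div_lt_one hden]
  exact h
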